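/- Fix reals ω₀ > 0, γ > 0, θ > 0. For an integer m set β := 2πm/θ and let Θ_m(c, c') := 4γ (4γ + iβ)^{−1} · { 1 + 2 (4γ + iβ)^{−1} [c + c' + (2γ + iβ)(iβ/2)]^{−1} ( [2(2γ + iβ)]^{−1} (c − c')² + (iβ/2)(c + c') ) }^{−1} (for m = 0 this reduces to Θ(c,c') = [1 + (c − c')²/(8γ²(c + c'))]^{−1}), and for an integer n ≥ 1 define M_{x,y}(m) = Σ_{j,j'=0}^n Θ_m(μ_j, μ_{j'}) ψ_j(x) ψ_{j'}(x) ψ_j(y) ψ_{j'}(y), where μ_j = ω₀² + 4 sin²(π j/(2(n+1))) and ψ_j(x) = ((2 − δ_{0,j})/(n+1))^{1/2} cos(π j (2x+1)/(2(n+1))). Then there exists a constant 𝔐 > 0, depending only on γ, θ and ω₀, such that for all n ≥ 1 and all m ∈ ℤ: Σ_{x=0}^n |M_{x,0}(m)|² ≤ 𝔐². -/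

import Mathlib

open Real

noncomputable section

/-- The `m`-th time-Fourier symbol `Θ_m(c, c')` of the memory kernel, with `β = 2πm/θ`
(for `m = 0` it reduces to `Θ(c,c') = [1 + (c−c')²/(8γ²(c+c'))]⁻¹`). -/
def thetaM (γ θ : ℝ) (m : ℤ) (c c' : ℝ) : ℂ :=
  let β : ℂ := ((2 * π * m / θ : ℝ) : ℂ)
  (4 * (γ : ℂ)) * (4 * (γ : ℂ) + Complex.I * β)⁻¹ *
    (1 + 2 * (4 * (γ : ℂ) + Complex.I * β)⁻¹ *
        ((c : ℂ) + (c' : ℂ) + (2 * (γ : ℂ) + Complex.I * β) * (Complex.I * β / 2))⁻¹ *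
        ((2 * (2 * (γ : ℂ) + Complex.I * β))⁻¹ * ((c : ℂ) - (c' : ℂ)) ^ 2
          + (Complex.I * β / 2) * ((c : ℂ) + (c' : ℂ))))⁻¹

/-- The Neumann eigenvalues shifted by the pinning: `μ_j = ω₀² + 4 sin²(πj/(2(n+1)))`. -/
def muN (n : ℕ) (ω₀ : ℝ) (j : ℕ) : ℝ :=
  ω₀ ^ 2 + 4 * Real.sin (π * j / (2 * (n + 1))) ^ 2

/-- The Neumann eigenvectors `ψ_j(x) = ((2 − δ_{0,j})/(n+1))^{1/2} cos(πj(2x+1)/(2(n+1)))`. -/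
def psiN (n j x : ℕ) : ℝ :=
  Real.sqrt ((2 - if j = 0 then 1 else 0) / (n + 1)) *
    Real.cos (π * j * (2 * x + 1) / (2 * (n + 1)))

/-- The `m`-th Fourier-mode kernel
`M_{x,y}(m) = Σ_{j,j'} Θ_m(μ_j, μ_{j'}) ψ_j(x) ψ_{j'}(x) ψ_j(y) ψ_{j'}(y)`. -/
def kerMC (n : ℕ) (ω₀ γ θ : ℝ) (m : ℤ) (x y : ℕ) : ℂ :=
  ∑ j ∈ Finset.range (n + 1), ∑ j' ∈ Finset.range (n + 1),
    thetaM γ θ m (muN n ω₀ j) (muN n ω₀ j') *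
      ((psiN n j x * psiN n j' x * psiN n j y * psiN n j' y : ℝ) : ℂ)

set_option maxHeartbeats 1000000

/-! ### Auxiliary lemmas -/

/-- telescoping Dirichlet-type cosine sum. -/
lemma aux_sum_cos_odd (N : ℕ) (φ : ℝ) :
    2 * Real.sin φ * ∑ x ∈ Finset.range N, Real.cos ((2 * x + 1) * φ)
      = Real.sin (2 * N * φ) := by
  have key : ∀ x : ℕ, Real.sin (2 * (x + 1 : ℕ) * φ) - Real.sin (2 * (x : ℕ) * φ)
      = 2 * Real.sin φ * Real.cos ((2 * x + 1) * φ) := by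
    intro x
    rw [Real.sin_sub_sin]
    push_cast
    rw [show (2*((x:ℝ)+1)*φ - 2*x*φ)/2 = φ by ring,
       show (2*((x:ℝ)+1)*φ + 2*x*φ)/2 = (2*x+1)*φ by ring]
  calc 2 * Real.sin φ * ∑ x ∈ Finset.range N, Real.cos ((2 * x + 1) * φ)
      = ∑ x ∈ Finset.range N,
          (Real.sin (2 * (x + 1 : ℕ) * φ) - Real.sin (2 * (x : ℕ) * φ)) := by
        rw [Finset.mul_sum]; exact Finset.sum_congr rfl fun x _ => (key x).symm
    _ = Real.sin (2 * N * φ) - Real.sin (2 * (0:ℕ) * φ) :=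
        Finset.sum_range_sub (fun x : ℕ => Real.sin (2 * (x:ℕ) * φ)) N
    _ = Real.sin (2 * N * φ) := by simp

lemma aux_sum_cos_nat (N k : ℕ) (hN : 0 < N) (hk0 : 0 < k) (hk : k < 2*N) :
    ∑ x ∈ Finset.range N, Real.cos ((2*x+1) * (π*k/(2*N))) = 0 := by
  have hNr : (0:ℝ) < N := by exact_mod_cast hN
  have hkr : (0:ℝ) < k := by exact_mod_cast hk0
  have hk2 : (k:ℝ) < 2*N := by exact_mod_cast hk
  have hπ := Real.pi_pos
  have hs : Real.sin (π*k/(2*N)) ≠ 0 := by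
    refine ne_of_gt (Real.sin_pos_of_pos_of_lt_pi (by positivity) ?_)
    rw [div_lt_iff₀ (by positivity)]
    nlinarith
  have h2 : Real.sin (2*(N:ℝ)*(π*k/(2*N))) = 0 := by
    rw [show 2*(N:ℝ)*(π*k/(2*N)) = k*π by field_simp]
    exact Real.sin_nat_mul_pi k
  have h3 := aux_sum_cos_odd N (π*k/(2*N))
  rw [h2] at h3
  rcases mul_eq_zero.mp h3 with h | h
  · exact absurd (mul_eq_zero.mp h) (by push_neg; exact ⟨two_ne_zero, hs⟩)
  · exact h

lemma aux_psi_orth_lt (n a b : ℕ) (ha : a ≤ n) (hba : b < a) :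
    ∑ x ∈ Finset.range (n+1), psiN n a x * psiN n b x = 0 := by
  have hN : (0:ℝ) < (n:ℝ) + 1 := by positivity
  set wa := (2 - if a = 0 then (1:ℝ) else 0) / (n + 1) with hwa
  set wb := (2 - if b = 0 then (1:ℝ) else 0) / (n + 1) with hwb
  have hterm : ∀ x : ℕ, psiN n a x * psiN n b x
      = (Real.sqrt wa * Real.sqrt wb) *
        ((Real.cos ((2*x+1) * (π*((a:ℝ)-b)/(2*(n+1)))) +
          Real.cos ((2*x+1) * (π*((a:ℝ)+b)/(2*(n+1)))))/2) := by
    intro x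
    have hA : (2*(x:ℝ)+1) * (π*((a:ℝ)-b)/(2*(n+1)))
        = π * a * (2*x+1) / (2*(n+1)) - π * b * (2*x+1) / (2*(n+1)) := by ring
    have hB : (2*(x:ℝ)+1) * (π*((a:ℝ)+b)/(2*(n+1)))
        = π * a * (2*x+1) / (2*(n+1)) + π * b * (2*x+1) / (2*(n+1)) := by ring
    rw [psiN, psiN, hA, hB, Real.cos_sub, Real.cos_add]
    ring
  rw [Finset.sum_congr rfl fun x _ => hterm x, ← Finset.mul_sum]
  have e1 : ∑ x ∈ Finset.range (n+1),
      ((Real.cos ((2*x+1) * (π*((a:ℝ)-b)/(2*(n+1)))) +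
        Real.cos ((2*x+1) * (π*((a:ℝ)+b)/(2*(n+1)))))/2)
      = ((∑ x ∈ Finset.range (n+1), Real.cos ((2*x+1) * (π*((a-b:ℕ))/(2*((n+1:ℕ)))))) +
         (∑ x ∈ Finset.range (n+1), Real.cos ((2*x+1) * (π*((a+b:ℕ))/(2*((n+1:ℕ)))))))/2 := by
    rw [← Finset.sum_add_distrib, Finset.sum_div]
    refine Finset.sum_congr rfl fun x _ => ?_
    have h1 : ((a - b : ℕ) : ℝ) = (a:ℝ) - b := by
      rw [Nat.cast_sub hba.le]
    have h2 : ((a + b : ℕ) : ℝ) = (a:ℝ) + b := by push_cast; ring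
    have h3 : (((n+1 : ℕ)) : ℝ) = (n:ℝ) + 1 := by push_cast; ring
    rw [h1, h2, h3]
  rw [e1, aux_sum_cos_nat (n+1) (a-b) (Nat.succ_pos n) (Nat.sub_pos_of_lt hba) (by omega),
    aux_sum_cos_nat (n+1) (a+b) (Nat.succ_pos n) (by omega) (by omega)]
  simp

lemma aux_psi_orth_self (n a : ℕ) (ha : a ≤ n) :
    ∑ x ∈ Finset.range (n+1), psiN n a x * psiN n a x = 1 := by
  have hN : (0:ℝ) < (n:ℝ) + 1 := by positivity
  by_cases h0 : a = 0
  · subst h0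
    have : ∀ x : ℕ, psiN n 0 x * psiN n 0 x = 1/((n:ℝ)+1) := by
      intro x
      have h1 : psiN n 0 x = Real.sqrt (1/((n:ℝ)+1)) := by
        rw [psiN]; norm_num
      rw [h1, Real.mul_self_sqrt (by positivity)]
    rw [Finset.sum_congr rfl fun x _ => this x, Finset.sum_const, Finset.card_range, nsmul_eq_mul]
    push_cast
    field_simp
  · have hterm : ∀ x : ℕ, psiN n a x * psiN n a x
        = (2/((n:ℝ)+1)) * (1/2 + Real.cos ((2*x+1) * (π*((2*a:ℕ))/(2*((n+1:ℕ)))))/2) := by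
      intro x
      rw [psiN, if_neg h0]
      rw [show Real.sqrt ((2-0)/((n:ℝ)+1)) * Real.cos (π * a * (2*x+1) / (2*(n+1))) *
          (Real.sqrt ((2-0)/((n:ℝ)+1)) * Real.cos (π * a * (2*x+1) / (2*(n+1))))
          = (Real.sqrt ((2-0)/((n:ℝ)+1)) * Real.sqrt ((2-0)/((n:ℝ)+1))) *
            Real.cos (π * a * (2*x+1) / (2*(n+1))) ^ 2 by ring]
      rw [Real.mul_self_sqrt (by rw [show (2:ℝ)-0 = 2 by norm_num]; positivity), Real.cos_sq]
      have harg : 2 * (π * a * (2*x+1) / (2*((n:ℝ)+1)))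
          = (2*(x:ℝ)+1) * (π*((2*a:ℕ))/(2*((n+1:ℕ)))) := by
        push_cast; ring
      rw [← harg]
      norm_num
    rw [Finset.sum_congr rfl fun x _ => hterm x, ← Finset.mul_sum, Finset.sum_add_distrib,
      ← Finset.sum_div, ← Finset.sum_div,
      aux_sum_cos_nat (n+1) (2*a) (Nat.succ_pos n) (by omega) (by omega)]
    simp only [Finset.sum_const, Finset.card_range, nsmul_eq_mul, zero_div, add_zero]
    field_simp
    norm_num

/-- Discrete orthonormality of the Neumann eigenvectors. -/
lemma aux_psi_orth (n a b : ℕ) (ha : a ≤ n) (hb : b ≤ n) :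
    ∑ x ∈ Finset.range (n+1), psiN n a x * psiN n b x = if a = b then 1 else 0 := by
  rcases eq_or_ne a b with h | h
  · subst h; rw [if_pos rfl]; exact aux_psi_orth_self n a ha
  · rw [if_neg h]
    rcases h.lt_or_gt with hlt | hlt
    · rw [Finset.sum_congr rfl fun x _ => mul_comm (psiN n a x) (psiN n b x)]
      exact aux_psi_orth_lt n b a hb hlt
    · exact aux_psi_orth_lt n a b ha hlt

/-- Parseval identity for the discrete Neumann basis. -/
lemma aux_parseval (n : ℕ) (r : ℕ → ℝ) :
    ∑ x ∈ Finset.range (n+1), (∑ j ∈ Finset.range (n+1), r j * psiN n j x)^2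
      = ∑ j ∈ Finset.range (n+1), r j^2 := by
  have expand : ∀ x : ℕ, (∑ j ∈ Finset.range (n+1), r j * psiN n j x)^2
      = ∑ j ∈ Finset.range (n+1), ∑ k ∈ Finset.range (n+1),
          (r j * r k) * (psiN n j x * psiN n k x) := by
    intro x
    rw [sq, Finset.sum_mul_sum]
    exact Finset.sum_congr rfl fun j _ => Finset.sum_congr rfl fun k _ => by ring
  rw [Finset.sum_congr rfl fun x _ => expand x, Finset.sum_comm]
  refine Finset.sum_congr rfl fun j hj => ?_
  rw [Finset.sum_comm]
  have hj' : j ≤ n := by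
    have := Finset.mem_range.mp hj; omega
  have step : ∀ k ∈ Finset.range (n+1),
      ∑ x ∈ Finset.range (n+1), (r j * r k) * (psiN n j x * psiN n k x)
        = if j = k then r j * r k else 0 := by
    intro k hk
    have hk' : k ≤ n := by
      have := Finset.mem_range.mp hk; omega
    rw [← Finset.mul_sum, aux_psi_orth n j k hj' hk']
    split <;> simp
  rw [Finset.sum_congr rfl step, Finset.sum_ite_eq (Finset.range (n+1)) j (fun k => r j * r k),
    if_pos hj]
  ring

/-- key polynomial inequality: `|Num|² ≤ |Den|²`. -/
lemma aux_key_ineq (t s D G : ℝ) (ht : 0 ≤ t) (hs : 0 ≤ s) (hD : 0 ≤ D) (hG : 0 ≤ G)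
    (hDs : D ≤ s^2) :
    (16*G*(s-t))^2 + (4*(4*G+2*s-t))^2*G*t
      ≤ (2*D + t^2 - (4*s+20*G)*t + 16*G*s)^2 + (8*(2*s+2*G-t))^2*G*t := by
  have hbr : 0 ≤ (16*s - 20*t)*D + 16*t*s^2 + 32*t*s*G + 4*t^2*G + 2*t^3 := by
    rcases le_total (20*t) (16*s) with h | h
    · have h1 : 0 ≤ (16*s - 20*t)*D := mul_nonneg (by linarith) hD
      nlinarith [mul_nonneg (mul_nonneg ht hs) hs, mul_nonneg (mul_nonneg ht hs) hG,
        mul_nonneg (mul_nonneg ht ht) hG, mul_nonneg (mul_nonneg ht ht) ht]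
    · have h1 : 0 ≤ (20*t - 16*s)*(s^2 - D) := mul_nonneg (by linarith) (by linarith)
      have h2 : 0 ≤ 16*s^3 - 4*t*s^2 + 2*t^3 := by
        nlinarith [mul_nonneg ht (sq_nonneg (t - 2*s)), mul_nonneg hs (sq_nonneg (t - 2*s)),
          mul_nonneg (mul_nonneg ht ht) hs, mul_nonneg (mul_nonneg hs hs) hs]
      nlinarith [mul_nonneg (mul_nonneg ht hs) hG, mul_nonneg (mul_nonneg ht ht) hG]
  nlinarith [sq_nonneg (2*D - 4*t*s + t^2), mul_nonneg hG hbr]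

lemma aux_ofReal_add_mul_I_ne_zero {A B : ℝ} (h : A ≠ 0 ∨ B ≠ 0) :
    (A:ℂ) + (B:ℂ)*Complex.I ≠ 0 := by
  intro hh
  rw [Complex.ext_iff] at hh
  simp at hh
  tauto

/-- the algebraic normal form of the symbol, over atomic field elements. -/
lemma aux_theta_alg (g A E P d2 s w : ℂ) (hA : A ≠ 0) (hE : E ≠ 0) (hP : P ≠ 0)
    (hD : A * (E * (2 * P)) + 2 * d2 + 2 * w * s * E ≠ 0) :
    4 * g * A⁻¹ * (1 + 2 * A⁻¹ * P⁻¹ * ((2 * E)⁻¹ * d2 + w / 2 * s))⁻¹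
      = (4 * g * (E * (2 * P))) / (A * (E * (2 * P)) + 2 * d2 + 2 * w * s * E) := by
  have h2 : (2:ℂ) ≠ 0 := two_ne_zero
  have hX : (1 + 2 * A⁻¹ * P⁻¹ * ((2 * E)⁻¹ * d2 + w / 2 * s))
      = (A * (E * (2 * P)) + 2 * d2 + 2 * w * s * E) / (A * (E * (2 * P))) := by
    rw [eq_div_iff (by exact mul_ne_zero hA (mul_ne_zero hE (mul_ne_zero h2 hP)))]
    rw [mul_inv]
    field_simp
    ring
  rw [hX, inv_div]
  rw [mul_div_assoc', div_eq_div_iff (by exact hD) (by exact hD)]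
  field_simp

/-- The symbol is bounded by `1` in modulus. -/
lemma aux_abs_theta_expr_le_one {γ : ℝ} (hγ : 0 < γ) (b : ℝ) {c c' : ℝ}
    (hc : 0 < c) (hc' : 0 < c') :
    norm ((4 * (γ : ℂ)) * (4 * (γ : ℂ) + Complex.I * (b:ℂ))⁻¹ *
      (1 + 2 * (4 * (γ : ℂ) + Complex.I * (b:ℂ))⁻¹ *
          ((c : ℂ) + (c' : ℂ) + (2 * (γ : ℂ) + Complex.I * (b:ℂ)) * (Complex.I * (b:ℂ) / 2))⁻¹ *
          ((2 * (2 * (γ : ℂ) + Complex.I * (b:ℂ)))⁻¹ * ((c : ℂ) - (c' : ℂ)) ^ 2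
            + (Complex.I * (b:ℂ) / 2) * ((c : ℂ) + (c' : ℂ))))⁻¹) ≤ 1 := by
  have hγ0 : γ ≠ 0 := ne_of_gt hγ
  set z : ℂ := Complex.I * (b:ℂ) with hz
  have hzre : z.re = 0 := by simp [hz]
  have hzim : z.im = b := by simp [hz]
  have hz1 : 4 * (γ:ℂ) + z ≠ 0 := by
    intro h
    have := congrArg Complex.re h
    simp [hzre] at this
    exact hγ0 (by linarith)
  have hz2 : 2 * (γ:ℂ) + z ≠ 0 := by
    intro h
    have := congrArg Complex.re h
    simp [hzre] at this
    exact hγ0 (by linarith)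
  have hPform : (c : ℂ) + (c' : ℂ) + (2 * (γ:ℂ) + z) * (z / 2)
      = ((c + c' - b^2/2 : ℝ):ℂ) + ((γ*b : ℝ):ℂ)*Complex.I := by
    rw [hz]; apply Complex.ext <;>
      simp [Complex.add_re, Complex.add_im, Complex.mul_re, Complex.mul_im,
        Complex.div_re, Complex.div_im, Complex.normSq_apply, Complex.sub_re, Complex.sub_im,
        ← Complex.ofReal_pow] <;>
      ring
  have hP : (c : ℂ) + (c' : ℂ) + (2 * (γ:ℂ) + z) * (z / 2) ≠ 0 := by
    rw [hPform]
    by_cases hb : b = 0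
    · exact aux_ofReal_add_mul_I_ne_zero (Or.inl (by subst hb; norm_num; nlinarith))
    · exact aux_ofReal_add_mul_I_ne_zero (Or.inr (by positivity))
  set NumC : ℂ := 4*(γ:ℂ)*((2*(γ:ℂ)+z)*(2*((c:ℂ) + (c':ℂ) + (2*(γ:ℂ)+z)*(z/2)))) with hNumdef
  set DenC : ℂ := (4*(γ:ℂ)+z)*((2*(γ:ℂ)+z)*(2*((c:ℂ) + (c':ℂ) + (2*(γ:ℂ)+z)*(z/2))))
      + 2*((c:ℂ)-(c':ℂ))^2 + 2*z*((c:ℂ)+(c':ℂ))*(2*(γ:ℂ)+z) with hDendef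
  have hNum : NumC = ((16*γ^2*(c+c'-b^2) : ℝ):ℂ)
      + ((4*γ*b*(4*γ^2+2*(c+c')-b^2) : ℝ):ℂ)*Complex.I := by
    rw [hNumdef, hz]; apply Complex.ext <;>
      simp [Complex.add_re, Complex.add_im, Complex.mul_re, Complex.mul_im,
        Complex.div_re, Complex.div_im, Complex.normSq_apply,
        ← Complex.ofReal_pow] <;> ring
  have hDenF : DenC = ((2*(c-c')^2 + (b^2)^2 - (4*(c+c')+20*γ^2)*b^2 + 16*γ^2*(c+c') : ℝ):ℂ)
      + ((8*γ*b*(2*(c+c')+2*γ^2-b^2) : ℝ):ℂ)*Complex.I := by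
    rw [hDendef, hz]; apply Complex.ext <;>
      simp [Complex.add_re, Complex.add_im, Complex.mul_re, Complex.mul_im,
        Complex.sub_re, Complex.sub_im, Complex.div_re, Complex.div_im, Complex.normSq_apply,
        ← Complex.ofReal_pow, pow_two] <;> ring
  have hDen : DenC ≠ 0 := by
    rw [hDenF]
    by_cases hb : b = 0
    · refine aux_ofReal_add_mul_I_ne_zero (Or.inl ?_)
      subst hb
      have h1 : 0 < 16*γ^2*(c+c') := by positivity
      nlinarith [sq_nonneg (c-c')]
    · by_cases hT : b^2 = 2*(c+c') + 2*γ^2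
      · refine aux_ofReal_add_mul_I_ne_zero (Or.inl ?_)
        rw [hT]
        nlinarith [mul_pos hc hc', mul_pos hγ hγ, mul_pos (mul_pos hγ hγ) (mul_pos hγ hγ),
          mul_pos (mul_pos hγ hγ) (add_pos hc hc'), mul_pos (add_pos hc hc') (add_pos hc hc')]
      · refine aux_ofReal_add_mul_I_ne_zero (Or.inr ?_)
        have h8 : 2*(c+c')+2*γ^2-b^2 ≠ 0 := fun h => hT (by linarith)
        have h9 : (8*γ*b) ≠ 0 := by positivity
        exact mul_ne_zero h9 h8
  have hEq := aux_theta_alg (γ:ℂ) (4*(γ:ℂ)+z) (2*(γ:ℂ)+z)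
      ((c:ℂ) + (c':ℂ) + (2*(γ:ℂ)+z)*(z/2)) (((c:ℂ)-(c':ℂ))^2) ((c:ℂ)+(c':ℂ)) z
      hz1 hz2 hP (by rw [← hDendef]; exact hDen)
  rw [hEq, ← hNumdef, ← hDendef, norm_div]
  rw [div_le_one (by exact norm_pos_iff.mpr hDen)]
  have h1 : norm NumC ^ 2 ≤ norm DenC ^ 2 := by
    rw [Complex.sq_norm, Complex.sq_norm, hNum, hDenF, Complex.normSq_add_mul_I,
      Complex.normSq_add_mul_I]
    have hk := aux_key_ineq (b^2) (c+c') ((c-c')^2) (γ^2) (sq_nonneg b) (by positivity)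
      (sq_nonneg _) (sq_nonneg _) (by nlinarith [mul_pos hc hc'])
    calc (16*γ^2*(c+c'-b^2))^2 + (4*γ*b*(4*γ^2+2*(c+c')-b^2))^2
        = (16*(γ^2)*((c+c')-b^2))^2 + (4*(4*(γ^2)+2*(c+c')-b^2))^2*(γ^2)*(b^2) := by ring
      _ ≤ (2*((c-c')^2) + (b^2)^2 - (4*(c+c')+20*(γ^2))*(b^2) + 16*(γ^2)*(c+c'))^2
            + (8*(2*(c+c')+2*(γ^2)-b^2))^2*(γ^2)*(b^2) := hk
      _ = (2*(c-c')^2 + (b^2)^2 - (4*(c+c')+20*γ^2)*b^2 + 16*γ^2*(c+c'))^2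
            + (8*γ*b*(2*(c+c')+2*γ^2-b^2))^2 := by ring
  have h2 := Real.sqrt_le_sqrt h1
  rwa [Real.sqrt_sq (norm_nonneg _), Real.sqrt_sq (norm_nonneg _)] at h2

lemma aux_abs_thetaM_le_one {γ : ℝ} (θ : ℝ) (hγ : 0 < γ) (m : ℤ) {c c' : ℝ}
    (hc : 0 < c) (hc' : 0 < c') : norm (thetaM γ θ m c c') ≤ 1 := by
  have h := aux_abs_theta_expr_le_one hγ (2*π*m/θ) hc hc'
  rw [thetaM]
  exact_mod_cast h

/-- Uniform bound on the boundary column of the Fourier-mode kernels: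
there is `𝔐 > 0`, depending only on `γ, θ, ω₀`, with
`Σ_{x=0}^n |M_{x,0}(m)|² ≤ 𝔐²` for all `n ≥ 1` and all `m ∈ ℤ`. -/
theorem kerMC_boundary_column_bound (ω₀ γ θ : ℝ) (hω : 0 < ω₀) (hγ : 0 < γ) (hθ : 0 < θ) :
    ∃ M > 0, ∀ n : ℕ, 1 ≤ n → ∀ m : ℤ,
      ∑ x ∈ Finset.range (n + 1), ‖kerMC n ω₀ γ θ m x 0‖ ^ 2 ≤ M ^ 2 := by
  refine ⟨3, by norm_num, ?_⟩
  intro n hn m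
  have hNpos : (0:ℝ) < (n:ℝ) + 1 := by positivity
  have hmu : ∀ j : ℕ, 0 < muN n ω₀ j := by
    intro j
    have h2 : 0 < ω₀^2 := by positivity
    have h3 := sq_nonneg (Real.sin (π * j / (2 * ((n:ℝ) + 1))))
    rw [muN]
    nlinarith
  have hΘ : ∀ j j', norm (thetaM γ θ m (muN n ω₀ j) (muN n ω₀ j')) ≤ 1 :=
    fun j j' => aux_abs_thetaM_le_one θ hγ m (hmu j) (hmu j')
  have hpsi_sq : ∀ j x : ℕ, psiN n j x ^ 2 ≤ 2/((n:ℝ)+1) := by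
    intro j x
    have hw0 : (0:ℝ) ≤ (2 - if j = 0 then 1 else 0) / ((n:ℝ) + 1) := by
      apply div_nonneg _ hNpos.le
      split <;> norm_num
    rw [psiN, mul_pow, Real.sq_sqrt hw0]
    have hcos := Real.cos_sq_le_one (π * j * (2*x+1) / (2*((n:ℝ)+1)))
    have hle : (2 - if j = 0 then (1:ℝ) else 0) ≤ 2 := by split <;> norm_num
    calc (2 - if j = 0 then (1:ℝ) else 0) / ((n:ℝ) + 1)
          * Real.cos (π * j * (2*x+1) / (2*((n:ℝ)+1))) ^ 2
        ≤ (2 - if j = 0 then (1:ℝ) else 0) / ((n:ℝ) + 1) * 1 :=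
          mul_le_mul_of_nonneg_left hcos hw0
      _ = (2 - if j = 0 then (1:ℝ) else 0) / ((n:ℝ) + 1) := mul_one _
      _ ≤ 2/((n:ℝ)+1) := by gcongr
  have hpsi0 : ∑ j ∈ Finset.range (n+1), psiN n j 0 ^ 2 ≤ 2 := by
    calc ∑ j ∈ Finset.range (n+1), psiN n j 0^2
        ≤ ∑ _j ∈ Finset.range (n+1), 2/((n:ℝ)+1) :=
          Finset.sum_le_sum fun j _ => hpsi_sq j 0
      _ = 2 := by
          rw [Finset.sum_const, Finset.card_range, nsmul_eq_mul]
          push_cast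
          field_simp
  set f : ℕ → ℕ → ℂ := fun j x => ∑ j' ∈ Finset.range (n+1),
      thetaM γ θ m (muN n ω₀ j) (muN n ω₀ j') * ((psiN n j' 0 * psiN n j' x : ℝ) : ℂ) with hf
  have hker : ∀ x, kerMC n ω₀ γ θ m x 0 = ∑ j ∈ Finset.range (n+1),
      ((psiN n j 0 * psiN n j x : ℝ) : ℂ) * f j x := by
    intro x
    rw [kerMC]
    refine Finset.sum_congr rfl fun j _ => ?_
    simp only [hf]
    rw [Finset.mul_sum]
    refine Finset.sum_congr rfl fun j' _ => ?_
    push_cast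
    ring
  have habs : ∀ x, norm (kerMC n ω₀ γ θ m x 0)
      ≤ ∑ j ∈ Finset.range (n+1), |psiN n j 0| * (|psiN n j x| * norm (f j x)) := by
    intro x
    rw [hker x]
    refine (norm_sum_le _ _).trans (le_of_eq ?_)
    refine Finset.sum_congr rfl fun j _ => ?_
    rw [norm_mul, Complex.norm_real, Real.norm_eq_abs, abs_mul]
    ring
  have hsq : ∀ x, norm (kerMC n ω₀ γ θ m x 0)^2
      ≤ 2 * ∑ j ∈ Finset.range (n+1), psiN n j x^2 * norm (f j x)^2 := by
    intro x
    have hcs := Finset.sum_mul_sq_le_sq_mul_sq (Finset.range (n+1))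
      (fun j => |psiN n j 0|) (fun j => |psiN n j x| * norm (f j x))
    have h1 : norm (kerMC n ω₀ γ θ m x 0)^2
        ≤ (∑ j ∈ Finset.range (n+1), |psiN n j 0| * (|psiN n j x| * norm (f j x)))^2 :=
      pow_le_pow_left₀ (norm_nonneg _) (habs x) 2
    have e1 : ∑ j ∈ Finset.range (n+1), (fun j => |psiN n j 0|) j ^2
        = ∑ j ∈ Finset.range (n+1), psiN n j 0^2 :=
      Finset.sum_congr rfl fun j _ => sq_abs _
    have e2 : ∑ j ∈ Finset.range (n+1), (fun j => |psiN n j x| * norm (f j x)) j ^2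
        = ∑ j ∈ Finset.range (n+1), psiN n j x^2 * norm (f j x)^2 :=
      Finset.sum_congr rfl fun j _ => by rw [mul_pow, sq_abs]
    rw [e1, e2] at hcs
    refine h1.trans (hcs.trans ?_)
    exact mul_le_mul_of_nonneg_right hpsi0 (Finset.sum_nonneg fun j _ =>
      mul_nonneg (sq_nonneg _) (sq_nonneg _))
  have hfsum : ∀ j, ∑ x ∈ Finset.range (n+1), norm (f j x)^2 ≤ 2 := by
    intro j
    have hre : ∀ x, (f j x).re = ∑ j' ∈ Finset.range (n+1),
        ((thetaM γ θ m (muN n ω₀ j) (muN n ω₀ j')).re * psiN n j' 0) * psiN n j' x := by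
      intro x
      simp only [hf]
      rw [Complex.re_sum]
      refine Finset.sum_congr rfl fun j' _ => ?_
      simp [Complex.mul_re]
      ring
    have him : ∀ x, (f j x).im = ∑ j' ∈ Finset.range (n+1),
        ((thetaM γ θ m (muN n ω₀ j) (muN n ω₀ j')).im * psiN n j' 0) * psiN n j' x := by
      intro x
      simp only [hf]
      rw [Complex.im_sum]
      refine Finset.sum_congr rfl fun j' _ => ?_
      simp [Complex.mul_im]
      ring
    have habs2 : ∀ x, norm (f j x)^2 = (f j x).re^2 + (f j x).im^2 := by
      intro x; rw [Complex.sq_norm, Complex.normSq_apply]; ring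
    calc ∑ x ∈ Finset.range (n+1), norm (f j x)^2
        = (∑ x ∈ Finset.range (n+1), (f j x).re^2)
          + (∑ x ∈ Finset.range (n+1), (f j x).im^2) := by
          rw [← Finset.sum_add_distrib]
          exact Finset.sum_congr rfl fun x _ => habs2 x
      _ = (∑ j' ∈ Finset.range (n+1),
            ((thetaM γ θ m (muN n ω₀ j) (muN n ω₀ j')).re * psiN n j' 0)^2)
          + (∑ j' ∈ Finset.range (n+1),
            ((thetaM γ θ m (muN n ω₀ j) (muN n ω₀ j')).im * psiN n j' 0)^2) := by
          rw [← aux_parseval n (fun j' => (thetaM γ θ m (muN n ω₀ j) (muN n ω₀ j')).re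
              * psiN n j' 0),
            ← aux_parseval n (fun j' => (thetaM γ θ m (muN n ω₀ j) (muN n ω₀ j')).im
              * psiN n j' 0)]
          congr 1
          · exact Finset.sum_congr rfl fun x _ => by rw [hre x]
          · exact Finset.sum_congr rfl fun x _ => by rw [him x]
      _ = ∑ j' ∈ Finset.range (n+1),
            (((thetaM γ θ m (muN n ω₀ j) (muN n ω₀ j')).re * psiN n j' 0)^2
            + ((thetaM γ θ m (muN n ω₀ j) (muN n ω₀ j')).im * psiN n j' 0)^2) :=
          (Finset.sum_add_distrib).symm
      _ ≤ ∑ j' ∈ Finset.range (n+1), psiN n j' 0^2 := by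
          refine Finset.sum_le_sum fun j' _ => ?_
          have h1 := hΘ j j'
          have h2 : Complex.normSq (thetaM γ θ m (muN n ω₀ j) (muN n ω₀ j')) ≤ 1 := by
            rw [← Complex.sq_norm]
            nlinarith [norm_nonneg (thetaM γ θ m (muN n ω₀ j) (muN n ω₀ j'))]
          rw [Complex.normSq_apply] at h2
          nlinarith [sq_nonneg (psiN n j' 0)]
      _ ≤ 2 := hpsi0
  calc ∑ x ∈ Finset.range (n+1), norm (kerMC n ω₀ γ θ m x 0)^2
      ≤ ∑ x ∈ Finset.range (n+1),
          2 * ∑ j ∈ Finset.range (n+1), psiN n j x^2 * norm (f j x)^2 :=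
        Finset.sum_le_sum fun x _ => hsq x
    _ = 2 * ∑ j ∈ Finset.range (n+1), ∑ x ∈ Finset.range (n+1),
          psiN n j x^2 * norm (f j x)^2 := by
        rw [← Finset.mul_sum]
        congr 1
        exact Finset.sum_comm
    _ ≤ 2 * ∑ j ∈ Finset.range (n+1), ∑ x ∈ Finset.range (n+1),
          (2/((n:ℝ)+1)) * norm (f j x)^2 := by
        gcongr with j hj x hx
        exact hpsi_sq j x
    _ = 2 * ∑ j ∈ Finset.range (n+1),
          (2/((n:ℝ)+1)) * ∑ x ∈ Finset.range (n+1), norm (f j x)^2 := by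
        congr 1
        exact Finset.sum_congr rfl fun j _ => (Finset.mul_sum _ _ _).symm
    _ ≤ 2 * ∑ _j ∈ Finset.range (n+1), (2/((n:ℝ)+1)) * 2 := by
        refine mul_le_mul_of_nonneg_left (Finset.sum_le_sum fun j _ => ?_) (by norm_num)
        exact mul_le_mul_of_nonneg_left (hfsum j) (by positivity)
    _ = 8 := by
        rw [Finset.sum_const, Finset.card_range, nsmul_eq_mul]
        push_cast
        field_simp
        ring
    _ ≤ 3^2 := by norm_num

end
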